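/- If G and H are connected graphs, then σ(G ∘ H) ≤ σ(G)·|V(H)| + σ(H), where ∘ denotes the lexicographic product. -/

import Mathlib

/-! Surrounding Cops and Robbers.

Game state: positions of the `k` cops (`Fin k → V`) and of the robber (`V`),
with the cops to move.  On the cops' turn each cop may stay or move along an
edge; the cops win immediately if every neighbour of the robber's vertex is
occupied by a cop.  Otherwise the robber must stay or move along an edge,
ending on a vertex not occupied by any cop (in particular, if a cop lands on
the robber's vertex he is compelled to move off it).  `CopsWin` is the least
fixed point expressing that the cops can force a win in finitely many moves. -/

namespace SurroundGame

variable {V : Type*} (G : SimpleGraph V)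

/-- One legal simultaneous move of the cops: each cop stays or moves along an edge. -/
def CopsMove {k : ℕ} (c c' : Fin k → V) : Prop :=
  ∀ i, c' i = c i ∨ G.Adj (c i) (c' i)

/-- One legal move of the robber (ignoring cop positions): stay or move along an edge. -/
def RobberMove (r r' : V) : Prop :=
  r' = r ∨ G.Adj r r'

/-- The robber at `r` is surrounded: every neighbour of `r` is occupied by a cop. -/
def Surrounded {k : ℕ} (c : Fin k → V) (r : V) : Prop :=
  ∀ w, G.Adj r w → ∃ i, c i = w

/-- With cops at `c`, robber at `r` and the cops to move, the cops can force a win: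
they make a legal move after which either the robber is surrounded, or every legal
robber response (to a vertex free of cops) leads to a position where they again win. -/
inductive CopsWin : {k : ℕ} → (Fin k → V) → V → Prop
  | surround {k : ℕ} (c : Fin k → V) (r : V) (c' : Fin k → V)
      (hmove : CopsMove G c c')
      (hsur : Surrounded G c' r) :
      CopsWin c r
  | step {k : ℕ} (c : Fin k → V) (r : V) (c' : Fin k → V)
      (hmove : CopsMove G c c')
      (hnext : ∀ r', RobberMove G r r' → (∀ i, c' i ≠ r') → CopsWin c' r') :
      CopsWin c r

/-- `k` cops have a winning strategy on `G`: they have an initial placement such that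
whatever starting vertex (unoccupied by cops) the robber picks, the cops win. -/
def CopsWinWith (k : ℕ) : Prop :=
  ∃ c : Fin k → V, ∀ r : V, (∀ i, c i ≠ r) → CopsWin G c r

/-- The surrounding cop number: the least number of cops with a winning strategy. -/
noncomputable def surroundNumber : ℕ :=
  sInf {k | CopsWinWith G k}

end SurroundGame


open SurroundGame

/-- The lexicographic product `G ∘ H`. -/
def lexProd {α β : Type*} (G : SimpleGraph α) (H : SimpleGraph β) :
    SimpleGraph (α × β) :=
  SimpleGraph.fromRel (fun x y => G.Adj x.1 y.1 ∨ (x.1 = y.1 ∧ H.Adj x.2 y.2))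

namespace SurroundAux

open SurroundGame

variable {α β : Type*} {G : SimpleGraph α} {H : SimpleGraph β}

lemma adj_left {a a' : α} (b b' : β) (h : G.Adj a a') :
    (lexProd G H).Adj (a, b) (a', b') := by
  refine (SimpleGraph.fromRel_adj _ _ _).2 ⟨?_, Or.inl (Or.inl h)⟩
  intro he; exact h.ne (congrArg Prod.fst he)

lemma adj_right (a : α) {b b' : β} (h : H.Adj b b') :
    (lexProd G H).Adj (a, b) (a, b') := by
  refine (SimpleGraph.fromRel_adj _ _ _).2 ⟨?_, Or.inl (Or.inr ⟨rfl, h⟩)⟩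
  intro he; exact h.ne (congrArg Prod.snd he)

lemma adj_cases {x y : α × β} (h : (lexProd G H).Adj x y) :
    G.Adj x.1 y.1 ∨ (x.1 = y.1 ∧ H.Adj x.2 y.2) := by
  rcases (SimpleGraph.fromRel_adj _ _ _).1 h with ⟨hne, h | h⟩
  · exact h
  · rcases h with h | ⟨h1, h2⟩
    · exact Or.inl h.symm
    · exact Or.inr ⟨h1.symm, h2.symm⟩

lemma reach_left {a a' : α} (b : β) (h : G.Reachable a a') :
    (lexProd G H).Reachable (a, b) (a', b) := by
  obtain ⟨w⟩ := h
  induction w with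
  | nil => exact SimpleGraph.Reachable.refl _
  | cons h p ih => exact ((adj_left b b h).reachable).trans ih

lemma reach_right (a : α) {b b' : β} (h : H.Reachable b b') :
    (lexProd G H).Reachable (a, b) (a, b') := by
  obtain ⟨w⟩ := h
  induction w with
  | nil => exact SimpleGraph.Reachable.refl _
  | cons h p ih => exact ((adj_right a h).reachable).trans ih

variable [Fintype β]

/-- The combined cop configuration: `kg` groups of `|β|` cops occupying full
fibers over the vertices `d i`, together with `kh` free cops at positions `q j`. -/
def pack (eβ : Fin (Fintype.card β) ≃ β) {kg kh : ℕ}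
    (d : Fin kg → α) (q : Fin kh → α × β) :
    Fin (kg * Fintype.card β + kh) → α × β :=
  fun i =>
    Sum.elim
      (fun ij : Fin (kg * Fintype.card β) =>
        (d (finProdFinEquiv.symm ij).1, eβ (finProdFinEquiv.symm ij).2))
      q (finSumFinEquiv.symm i)

variable (eβ : Fin (Fintype.card β) ≃ β) {kg kh : ℕ}

lemma pack_inl (d : Fin kg → α) (q : Fin kh → α × β)
    (ab : Fin kg × Fin (Fintype.card β)) :
    pack eβ d q (finSumFinEquiv (Sum.inl (finProdFinEquiv ab))) = (d ab.1, eβ ab.2) := by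
  unfold pack
  rw [Equiv.symm_apply_apply, Sum.elim_inl, Equiv.symm_apply_apply]

lemma pack_inr (d : Fin kg → α) (q : Fin kh → α × β) (j : Fin kh) :
    pack eβ d q (finSumFinEquiv (Sum.inr j)) = q j := by
  unfold pack
  rw [Equiv.symm_apply_apply, Sum.elim_inr]

lemma pack_fiber (d : Fin kg → α) (q : Fin kh → α × β) (a : Fin kg) (b : β) :
    ∃ i, pack eβ d q i = (d a, b) :=
  ⟨finSumFinEquiv (Sum.inl (finProdFinEquiv (a, eβ.symm b))), by
    rw [pack_inl]; simp⟩

lemma pack_free (d : Fin kg → α) (q : Fin kh → α × β) (j : Fin kh) :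
    ∃ i, pack eβ d q i = q j :=
  ⟨finSumFinEquiv (Sum.inr j), pack_inr eβ d q j⟩

lemma pack_move {d d' : Fin kg → α} {q q' : Fin kh → α × β}
    (hd : CopsMove G d d')
    (hq : ∀ j, q' j = q j ∨ (lexProd G H).Adj (q j) (q' j)) :
    CopsMove (lexProd G H) (pack eβ d q) (pack eβ d' q') := by
  intro i
  obtain ⟨s, rfl⟩ := finSumFinEquiv.surjective i
  cases s with
  | inl ij =>
    obtain ⟨ab, rfl⟩ := finProdFinEquiv.surjective ij
    rw [pack_inl, pack_inl]
    rcases hd ab.1 with h | h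
    · left; rw [h]
    · right; exact adj_left _ _ h
  | inr j =>
    rw [pack_inr, pack_inr]
    exact hq j

/-- With the fibers over `d` full and surrounding `g` in `G`, a robber on fiber `g`
cannot leave it. -/
lemma trapped {d : Fin kg → α} {g : α} (hsur : Surrounded G d g)
    {q : Fin kh → α × β} {r r' : α × β} (hr : r.1 = g)
    (hm : RobberMove (lexProd G H) r r')
    (hfree : ∀ i, pack eβ d q i ≠ r') : r'.1 = g := by
  rcases hm with rfl | hadj
  · exact hr
  · rcases adj_cases hadj with h | ⟨h, _⟩
    · rw [hr] at h
      obtain ⟨a, ha⟩ := hsur _ h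
      obtain ⟨i, hi⟩ := pack_fiber eβ d q a r'.2
      exact absurd (by rw [hi, ha]) (hfree i)
    · exact h.symm.trans hr

/-- The goal predicate during the travelling/endgame phase: the fibers over `d`
are full (and surround `g`), the free cops stand at `q`, and the cops win against
any robber on fiber `g` not occupied by a cop. -/
def GoalQ (G : SimpleGraph α) (H : SimpleGraph β) (eβ : Fin (Fintype.card β) ≃ β)
    {kg kh : ℕ} (d : Fin kg → α) (g : α) (q : Fin kh → α × β) : Prop :=
  ∀ r : α × β, r.1 = g → (∀ i, pack eβ d q i ≠ r) →
    CopsWin (lexProd G H) (pack eβ d q) r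

/-- Endgame: the free cops stand on fiber `g` at the positions of a winning
`H`-configuration; simulate the `H`-game. -/
lemma lemC {d : Fin kg → α} {g : α} (hsur : Surrounded G d g)
    {m : Fin kh → β} {h : β} (hw : CopsWin H m h) :
    CopsWin (lexProd G H) (pack eβ d (fun j => (g, m j))) (g, h) := by
  induction hw with
  | surround c r c' hmove hs =>
    refine CopsWin.surround _ _ (pack eβ d (fun j => (g, c' j)))
      (pack_move eβ (fun a => Or.inl rfl) ?_) ?_
    · intro j
      rcases hmove j with h1 | h1
      · exact Or.inl (by rw [h1])
      · exact Or.inr (adj_right g h1)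
    · intro w hw'
      rcases adj_cases hw' with h1 | ⟨h1, h2⟩
      · obtain ⟨a, ha⟩ := hsur _ h1
        obtain ⟨i, hi⟩ := pack_fiber eβ d (fun j => (g, c' j)) a w.2
        exact ⟨i, by rw [hi, ha]⟩
      · obtain ⟨j, hj⟩ := hs _ h2
        obtain ⟨i, hi⟩ := pack_free eβ d (fun j => (g, c' j)) j
        exact ⟨i, by rw [hi, hj]; exact Prod.ext h1 rfl⟩
  | step c r c' hmove hnext ih =>
    refine CopsWin.step _ _ (pack eβ d (fun j => (g, c' j)))
      (pack_move eβ (fun a => Or.inl rfl) ?_) ?_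
    · intro j
      rcases hmove j with h1 | h1
      · exact Or.inl (by rw [h1])
      · exact Or.inr (adj_right g h1)
    · intro r' hm hfree
      have hr'1 : r'.1 = g := trapped eβ hsur rfl hm hfree
      have hHmove : RobberMove H r r'.2 := by
        rcases hm with rfl | hadj
        · exact Or.inl rfl
        · rcases adj_cases hadj with h1 | ⟨h1, h2⟩
          · rw [hr'1] at h1; exact (G.irrefl h1).elim
          · exact Or.inr h2
      have hHfree : ∀ j, c' j ≠ r'.2 := by
        intro j hj
        obtain ⟨i, hi⟩ := pack_free eβ d (fun j => (g, c' j)) j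
        exact hfree i (by rw [hi]; show (g, c' j) = r'; rw [hj, ← hr'1])
      have h3 := ih r'.2 hHmove hHfree
      have h4 : r' = (g, r'.2) := by rw [← hr'1]
      rw [h4]; exact h3

lemma lemStep {d : Fin kg → α} {g : α} (hsur : Surrounded G d g)
    {q : Fin kh → α × β} {j : Fin kh} {x' : α × β}
    (hadj : q j = x' ∨ (lexProd G H).Adj (q j) x')
    (hnext : GoalQ G H eβ d g (Function.update q j x')) :
    GoalQ G H eβ d g q := by
  intro r hr _
  refine CopsWin.step _ _ (pack eβ d (Function.update q j x'))
    (pack_move eβ (fun a => Or.inl rfl) ?_) ?_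
  · intro j'
    rcases eq_or_ne j' j with rfl | hne
    · rw [Function.update_self]
      rcases hadj with h | h
      · exact Or.inl h.symm
      · exact Or.inr h
    · exact Or.inl (Function.update_of_ne hne _ _)
  · intro r' hm hfree
    exact hnext r' (trapped eβ hsur hr hm hfree) hfree

lemma lemWalk {d : Fin kg → α} {g : α} (hsur : Surrounded G d g)
    (q : Fin kh → α × β) (j : Fin kh) :
    ∀ {x t : α × β} (_ : (lexProd G H).Walk x t),
      GoalQ G H eβ d g (Function.update q j t) → GoalQ G H eβ d g (Function.update q j x) := by
  intro x t w
  induction w with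
  | nil => exact id
  | @cons u v t' hadj w ih =>
    intro ht
    have h2 : GoalQ G H eβ d g (Function.update (Function.update q j u) j v) := by
      rw [Function.update_idem]; exact ih ht
    refine lemStep eβ hsur ?_ h2
    rw [Function.update_self]
    exact Or.inr hadj

lemma lemTravel (hG : G.Connected) (hH : H.Connected)
    {d : Fin kg → α} {g : α} (hsur : Surrounded G d g)
    (tgt : Fin kh → α × β) (htgt : GoalQ G H eβ d g tgt) :
    ∀ q : Fin kh → α × β, GoalQ G H eβ d g q := by
  have hreach : ∀ x y : α × β, (lexProd G H).Reachable x y := by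
    rintro ⟨x1, x2⟩ ⟨y1, y2⟩
    exact (reach_left x2 (hG.preconnected x1 y1)).trans
      (reach_right y1 (hH.preconnected x2 y2))
  intro q
  have key : ∀ n : ℕ, GoalQ G H eβ d g (fun j => if j.val < n then q j else tgt j) := by
    intro n
    induction n with
    | zero =>
      have h0 : (fun j : Fin kh => if j.val < 0 then q j else tgt j) = tgt :=
        funext fun j => if_neg (Nat.not_lt_zero _)
      rw [h0]; exact htgt
    | succ n ih =>
      by_cases hn : n < kh
      · set jn : Fin kh := ⟨n, hn⟩ with hjn
        have h1 : (fun j : Fin kh => if j.val < n + 1 then q j else tgt j)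
            = Function.update (fun j : Fin kh => if j.val < n then q j else tgt j)
              jn (q jn) := by
          funext j'
          rcases eq_or_ne j' jn with rfl | hne
          · rw [Function.update_self, if_pos (Nat.lt_succ_self _)]
          · rw [Function.update_of_ne hne]
            have hv : j'.val ≠ n := fun h => hne (Fin.ext h)
            by_cases h2 : j'.val < n
            · rw [if_pos h2, if_pos (Nat.lt_succ_of_lt h2)]
            · rw [if_neg h2, if_neg (fun h3 =>
                h2 (Nat.lt_of_le_of_ne (Nat.lt_succ_iff.1 h3) hv))]
        rw [h1]
        obtain ⟨w⟩ := hreach (q jn) (tgt jn)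
        refine lemWalk eβ hsur _ jn w ?_
        have h0 : Function.update
              (fun j : Fin kh => if j.val < n then q j else tgt j) jn (tgt jn)
            = fun j : Fin kh => if j.val < n then q j else tgt j := by
          funext j'
          rcases eq_or_ne j' jn with rfl | hne
          · rw [Function.update_self, if_neg (lt_irrefl _)]
          · rw [Function.update_of_ne hne]
        rw [h0]; exact ih
      · have h1 : (fun j : Fin kh => if j.val < n + 1 then q j else tgt j)
            = fun j : Fin kh => if j.val < n then q j else tgt j := by
          funext j'
          have hj : j'.val < n := lt_of_lt_of_le j'.isLt (le_of_not_gt hn)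
          rw [if_pos hj, if_pos (Nat.lt_succ_of_lt hj)]
        rw [h1]; exact ih
  have hq : q = fun j : Fin kh => if j.val < kh then q j else tgt j :=
    funext fun j => (if_pos j.isLt).symm
  rw [hq]; exact key kh

lemma lemBase {d : Fin kg → α} {g : α} (hsur : Surrounded G d g)
    {cH : Fin kh → β} (winH : ∀ h, (∀ j, cH j ≠ h) → CopsWin H cH h) :
    GoalQ G H eβ d g (fun j => (g, cH j)) := by
  intro r hr hfree
  have hfH : ∀ j, cH j ≠ r.2 := by
    intro j hj
    obtain ⟨i, hi⟩ := pack_free eβ d (fun j => (g, cH j)) j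
    exact hfree i (by rw [hi]; show (g, cH j) = r; rw [hj, ← hr])
  have h1 := lemC eβ hsur (winH r.2 hfH)
  have h2 : r = (g, r.2) := by rw [← hr]
  rw [h2]; exact h1

lemma lemA (hG : G.Connected) (hH : H.Connected)
    {cH : Fin kh → β} (winH : ∀ h, (∀ j, cH j ≠ h) → CopsWin H cH h)
    {d : Fin kg → α} {g : α} (hw : CopsWin G d g) :
    ∀ (p : Fin kh → α × β) (r : α × β), r.1 = g →
      CopsWin (lexProd G H) (pack eβ d p) r := by
  induction hw with
  | surround c rG c' hmove hs =>
    intro p r hr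
    refine CopsWin.step _ _ (pack eβ c' p)
      (pack_move eβ hmove (fun j => Or.inl rfl)) ?_
    intro r' hm hfree
    have hr' : r'.1 = rG := trapped eβ hs hr hm hfree
    exact lemTravel eβ hG hH hs _ (lemBase eβ hs winH) p r' hr' hfree
  | step c rG c' hmove hnext ih =>
    intro p r hr
    refine CopsWin.step _ _ (pack eβ c' p)
      (pack_move eβ hmove (fun j => Or.inl rfl)) ?_
    intro r' hm hfree
    have hGfree : ∀ i, c' i ≠ r'.1 := by
      intro i hi
      obtain ⟨i', hi'⟩ := pack_fiber eβ c' p i r'.2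
      exact hfree i' (by rw [hi', hi])
    have hGmove : RobberMove G rG r'.1 := by
      rcases hm with rfl | hadj
      · exact Or.inl hr
      · rcases adj_cases hadj with h1 | ⟨h1, h2⟩
        · rw [hr] at h1; exact Or.inr h1
        · exact Or.inl (h1.symm.trans hr)
    exact ih r'.1 hGmove hGfree p r' rfl

lemma winWith_card {γ : Type*} [Fintype γ] (K : SimpleGraph γ) :
    CopsWinWith K (Fintype.card γ) := by
  refine ⟨(Fintype.equivFin γ).symm, ?_⟩
  intro r hr
  exact absurd (Equiv.symm_apply_apply _ _) (hr _)

end SurroundAux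

open SurroundAux in
/-- For connected graphs, `σ(G ∘ H) ≤ σ(G)·|V(H)| + σ(H)`. -/
theorem surroundNumber_lexProd {α β : Type*} [Fintype α] [Fintype β]
    (G : SimpleGraph α) (H : SimpleGraph β)
    (hG : G.Connected) (hH : H.Connected) :
    surroundNumber (lexProd G H) ≤
      surroundNumber G * Fintype.card β + surroundNumber H := by
  classical
  obtain ⟨a0⟩ : Nonempty α := hG.nonempty
  obtain ⟨b0⟩ : Nonempty β := hH.nonempty
  have hGmem : CopsWinWith G (surroundNumber G) :=
    Nat.sInf_mem (⟨_, winWith_card G⟩ : {k | CopsWinWith G k}.Nonempty)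
  have hHmem : CopsWinWith H (surroundNumber H) :=
    Nat.sInf_mem (⟨_, winWith_card H⟩ : {k | CopsWinWith H k}.Nonempty)
  obtain ⟨cG, hcG⟩ := hGmem
  obtain ⟨cH, hcH⟩ := hHmem
  have hwin : CopsWinWith (lexProd G H)
      (surroundNumber G * Fintype.card β + surroundNumber H) := by
    set eβ := (Fintype.equivFin β).symm
    refine ⟨pack eβ cG (fun _ => (a0, b0)), ?_⟩
    intro r hfree
    have hGfree : ∀ i, cG i ≠ r.1 := by
      intro i hi
      obtain ⟨i', hi'⟩ := pack_fiber eβ cG (fun _ => (a0, b0)) i r.2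
      exact hfree i' (by rw [hi', hi])
    exact lemA eβ hG hH hcH (hcG r.1 hGfree) _ r rfl
  exact Nat.sInf_le hwin
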